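/- Let G be a graph, v a support vertex of G, and G' the graph obtained from G by adding a new vertex v' adjacent only to v. Then (D,T) is a DT-pair of G if and only if (D ∪ {v'}, T) is a DT-pair of G'. In particular, G has a DT-pair if and only if G' has a DT-pair. -/

import Mathlib

/-- `D` is a dominating set of `G`: every vertex outside `D` has a neighbor in `D`. -/
def Dominates {V : Type*} (G : SimpleGraph V) (D : Set V) : Prop :=
  ∀ v, v ∉ D → ∃ u ∈ D, G.Adj v u

/-- `T` is a total dominating set of `G`: every vertex has a neighbor in `T`. -/
def TotallyDominates {V : Type*} (G : SimpleGraph V) (T : Set V) : Prop :=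
  ∀ v, ∃ u ∈ T, G.Adj v u

/-- `(D, T)` is a DT-pair in `G`. -/
def DTPair {V : Type*} (G : SimpleGraph V) (D T : Set V) : Prop :=
  Disjoint D T ∧ Dominates G D ∧ TotallyDominates G T

/-- `G` has a DT-pair. -/
def HasDTPair {V : Type*} (G : SimpleGraph V) : Prop :=
  ∃ D T : Set V, DTPair G D T

/-- The graph obtained from `G` by adding a new vertex (`none`) adjacent only to `v`. -/
def addLeaf {V : Type*} (G : SimpleGraph V) (v : V) : SimpleGraph (Option V) where
  Adj a b := (∃ x y, a = some x ∧ b = some y ∧ G.Adj x y) ∨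
    (a = none ∧ b = some v) ∨ (a = some v ∧ b = none)
  symm := by
    constructor
    rintro a b (⟨x, y, rfl, rfl, h⟩ | ⟨rfl, rfl⟩ | ⟨rfl, rfl⟩)
    · exact Or.inl ⟨y, x, rfl, rfl, h.symm⟩
    · exact Or.inr (Or.inr ⟨rfl, rfl⟩)
    · exact Or.inr (Or.inl ⟨rfl, rfl⟩)
  loopless := by
    constructor
    rintro a (⟨x, y, rfl, h, hxy⟩ | ⟨rfl, h⟩ | ⟨h, h'⟩)
    · exact G.loopless.irrefl x (by cases h; exact hxy)
    · exact Option.some_ne_none v h.symm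
    · exact Option.some_ne_none v (h.symm.trans h')

section AuxLemmas
variable {V : Type*}

lemma addLeaf_adj_some_some {G : SimpleGraph V} {v x y : V} :
    (addLeaf G v).Adj (some x) (some y) ↔ G.Adj x y := by
  constructor
  · rintro (⟨a, b, ha, hb, h⟩ | ⟨h, _⟩ | ⟨_, h⟩)
    · cases ha; cases hb; exact h
    · exact nomatch h
    · exact nomatch h
  · intro h; exact Or.inl ⟨x, y, rfl, rfl, h⟩

lemma addLeaf_adj_some_none {G : SimpleGraph V} {v x : V} :
    (addLeaf G v).Adj (some x) none ↔ x = v := by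
  constructor
  · rintro (⟨a, b, _, hb, _⟩ | ⟨h, _⟩ | ⟨h, _⟩)
    · exact nomatch hb
    · exact nomatch h
    · exact Option.some.inj h
  · rintro rfl; exact Or.inr (Or.inr ⟨rfl, rfl⟩)

lemma addLeaf_adj_none {G : SimpleGraph V} {v : V} {u : Option V} :
    (addLeaf G v).Adj none u ↔ u = some v := by
  constructor
  · rintro (⟨a, b, ha, _, _⟩ | ⟨_, h⟩ | ⟨h, _⟩)
    · exact nomatch ha
    · exact h
    · exact nomatch h
  · rintro rfl; exact Or.inr (Or.inl ⟨rfl, rfl⟩)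

end AuxLemmas

/-- Adding a new leaf `v'` adjacent to a support vertex `v` of `G`:
`(D, T)` is a DT-pair of `G` iff `(D ∪ {v'}, T)` is a DT-pair of `G'`;
in particular `G` has a DT-pair iff `G'` has one. -/
theorem addLeaf_DTPair_iff {V : Type*} [Fintype V] (G : SimpleGraph V)
    [DecidableRel G.Adj] (v : V) (hv : ∃ l, G.Adj v l ∧ G.degree l = 1) :
    (∀ D T : Set V,
      DTPair G D T ↔
        DTPair (addLeaf G v) ((some '' D) ∪ {none}) (some '' T)) ∧
    (HasDTPair G ↔ HasDTPair (addLeaf G v)) := by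
  obtain ⟨l, hvl, hdeg⟩ := hv
  have huniq : ∀ y, G.Adj l y → y = v := by
    intro y hy
    have h1 : y ∈ G.neighborFinset l := by simpa using hy
    have h2 : v ∈ G.neighborFinset l := by simpa using hvl.symm
    exact Finset.card_le_one.mp (le_of_eq hdeg) y h1 v h2
  have hlv : l ≠ v := fun h => G.loopless.irrefl v (h ▸ hvl)
  -- key: from any DT-pair of G' in which `none ∈ D'` and `none ∉ T'`,
  -- the preimages under `some` form a DT-pair of G.
  have key : ∀ D' T' : Set (Option V), Disjoint D' T' → Dominates (addLeaf G v) D' →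
      TotallyDominates (addLeaf G v) T' → none ∈ D' →
      DTPair G (some ⁻¹' D') (some ⁻¹' T') := by
    intro D' T' hdisj hdom htot hnone
    have hnoneT : none ∉ T' := Set.disjoint_left.mp hdisj hnone
    refine ⟨Disjoint.preimage _ hdisj, ?_, ?_⟩
    · -- Dominates
      intro x hx
      obtain ⟨u, huD, hxu⟩ := hdom (some x) hx
      cases u with
      | some y => exact ⟨y, huD, addLeaf_adj_some_some.mp hxu⟩
      | none =>
          have hxv : x = v := addLeaf_adj_some_none.mp hxu
          subst hxv
          -- show l ∈ some ⁻¹' D'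
          have hlD : some l ∈ D' := by
            by_contra hlD
            obtain ⟨u, huD, hlu⟩ := hdom (some l) hlD
            cases u with
            | none => exact hlv (addLeaf_adj_some_none.mp hlu)
            | some y =>
                have := huniq y (addLeaf_adj_some_some.mp hlu)
                subst this
                exact hx huD
          exact ⟨l, hlD, hvl⟩
    · -- TotallyDominates
      intro x
      obtain ⟨u, huT, hxu⟩ := htot (some x)
      cases u with
      | some y => exact ⟨y, huT, addLeaf_adj_some_some.mp hxu⟩
      | none => exact absurd huT hnoneT
  have part1 : ∀ D T : Set V,
      DTPair G D T ↔
        DTPair (addLeaf G v) ((some '' D) ∪ {none}) (some '' T) := by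
    intro D T
    constructor
    · rintro ⟨hdisj, hdom, htot⟩
      have hvT : v ∈ T := by
        obtain ⟨u, huT, hul⟩ := htot l
        rwa [huniq u hul] at huT
      refine ⟨?_, ?_, ?_⟩
      · rw [Set.disjoint_left]
        rintro a (⟨x, hx, rfl⟩ | ha)
        · rintro ⟨y, hy, hyx⟩
          cases Option.some.inj hyx
          exact Set.disjoint_left.mp hdisj hx hy
        · rintro ⟨y, _, hy⟩
          rw [Set.mem_singleton_iff.mp ha] at hy
          exact nomatch hy
      · rintro (a | a) ha
        · exact absurd (Or.inr rfl) ha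
        · have haD : a ∉ D := fun h => ha (Or.inl ⟨a, h, rfl⟩)
          obtain ⟨u, huD, hau⟩ := hdom a haD
          exact ⟨some u, Or.inl ⟨u, huD, rfl⟩, addLeaf_adj_some_some.mpr hau⟩
      · rintro (a | a)
        · exact ⟨some v, ⟨v, hvT, rfl⟩, addLeaf_adj_none.mpr rfl⟩
        · obtain ⟨u, huT, hau⟩ := htot a
          exact ⟨some u, ⟨u, huT, rfl⟩, addLeaf_adj_some_some.mpr hau⟩
    · rintro ⟨hdisj, hdom, htot⟩
      have := key _ _ hdisj hdom htot (Or.inr rfl)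
      have hD : some ⁻¹' ((some '' D) ∪ {none}) = D := by
        ext x
        simp [Set.preimage_union, Set.preimage_image_eq _ (Option.some_injective V)]
      have hT : some ⁻¹' (some '' T) = T :=
        Set.preimage_image_eq _ (Option.some_injective V)
      rwa [hD, hT] at this
  refine ⟨part1, ?_, ?_⟩
  · rintro ⟨D, T, h⟩
    exact ⟨_, _, (part1 D T).mp h⟩
  · rintro ⟨D', T', hdisj, hdom, htot⟩
    have hvT' : some v ∈ T' := by
      obtain ⟨u, huT, hu⟩ := htot none
      rwa [addLeaf_adj_none.mp hu] at huT
    have hnone : none ∈ D' := by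
      by_contra h
      obtain ⟨u, huD, hu⟩ := hdom none h
      rw [addLeaf_adj_none.mp hu] at huD
      exact Set.disjoint_left.mp hdisj huD hvT'
    exact ⟨_, _, key D' T' hdisj hdom htot hnone⟩
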